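/- Let ⊘ be a uniform left Kronecker quotient over a field F realized by the matrices Q(A), and let {A_1, …, A_{mn}} be a basis of the vector space M(F,m,n) (each A_j is necessarily nonzero). Then the following are equivalent: (1) for all s,t ∈ ℕ and all M ∈ M(F,ms,nt), M = Σ_{j=1}^{mn} A_j ⊗ (A_j ⊘ M); (2) Q(A_j) ∘ A_k = δ_{j,k} for all j,k ∈ {1,…,mn}. -/

import Mathlib

open Matrix
open scoped Kronecker

def pfrob {F : Type*} [Field F] {I J S T : Type*} [Fintype I] [Fintype J]
    (A : Matrix I J F) (M : Matrix (I × S) (J × T) F) : Matrix S T F :=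
  Matrix.of fun u v => ∑ j, ∑ k, A j k * M (j, u) (k, v)

def pfrobS {F : Type*} [Field F] {I J : Type*} [Fintype I] [Fintype J]
    (A M : Matrix I J F) : F := ∑ j, ∑ k, A j k * M j k

section helpers
variable {F : Type*} [Field F] {I J S T : Type*} [Fintype I] [Fintype J]

/-- `pfrob A` as a linear map in `M`. -/
def pfrobL (A : Matrix I J F) :
    Matrix (I × S) (J × T) F →ₗ[F] Matrix S T F where
  toFun M := pfrob A M
  map_add' M N := by ext u v; simp [pfrob, mul_add, Finset.sum_add_distrib]
  map_smul' c M := by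
    ext u v
    simp [pfrob, Finset.mul_sum, mul_left_comm]

/-- `pfrobS A` as a linear map in `M`. -/
def pfrobSL (A : Matrix I J F) : Matrix I J F →ₗ[F] F where
  toFun M := pfrobS A M
  map_add' M N := by simp [pfrobS, mul_add, Finset.sum_add_distrib]
  map_smul' c M := by simp [pfrobS, Finset.mul_sum, mul_left_comm]

/-- `A ⊗ₖ ·` as a linear map. -/
def kronR (A : Matrix I J F) :
    Matrix S T F →ₗ[F] Matrix (I × S) (J × T) F where
  toFun B := A ⊗ₖ B
  map_add' B C := by ext ⟨i, u⟩ ⟨j, v⟩; simp [Matrix.kroneckerMap_apply, mul_add]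
  map_smul' c B := by ext ⟨i, u⟩ ⟨j, v⟩; simp [Matrix.kroneckerMap_apply, mul_left_comm]

/-- `· ⊗ₖ B` as a linear map. -/
def kronL (B : Matrix S T F) :
    Matrix I J F →ₗ[F] Matrix (I × S) (J × T) F where
  toFun A := A ⊗ₖ B
  map_add' A C := by ext ⟨i, u⟩ ⟨j, v⟩; simp [Matrix.kroneckerMap_apply, add_mul]
  map_smul' c A := by ext ⟨i, u⟩ ⟨j, v⟩; simp [Matrix.kroneckerMap_apply, mul_assoc]

@[simp] lemma pfrobL_apply (A : Matrix I J F) (M : Matrix (I × S) (J × T) F) :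
    pfrobL A M = pfrob A M := rfl
@[simp] lemma pfrobSL_apply (A M : Matrix I J F) : pfrobSL A M = pfrobS A M := rfl
@[simp] lemma kronR_apply (A : Matrix I J F) (B : Matrix S T F) :
    kronR A B = A ⊗ₖ B := rfl
@[simp] lemma kronL_apply (A : Matrix I J F) (B : Matrix S T F) :
    kronL B A = A ⊗ₖ B := rfl

lemma pfrob_sum {ι : Type*} (A : Matrix I J F) (s : Finset ι)
    (f : ι → Matrix (I × S) (J × T) F) :
    pfrob A (∑ i ∈ s, f i) = ∑ i ∈ s, pfrob A (f i) := by
  have h := map_sum (pfrobL A) f s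
  simp only [pfrobL_apply] at h
  exact h

lemma kron_sum {ι : Type*} (A : Matrix I J F) (s : Finset ι)
    (f : ι → Matrix S T F) :
    A ⊗ₖ (∑ i ∈ s, f i) = ∑ i ∈ s, A ⊗ₖ f i := by
  have h := map_sum (kronR A) f s
  simp only [kronR_apply] at h
  exact h

lemma pfrob_kron (A C : Matrix I J F) (B : Matrix S T F) :
    pfrob A (C ⊗ₖ B) = pfrobS A C • B := by
  ext u v
  simp [pfrob, pfrobS, Matrix.kroneckerMap_apply, Finset.sum_mul, mul_assoc]

lemma decomp (M : Matrix (I × S) (J × T) F) [DecidableEq I] [DecidableEq J] :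
    M = ∑ a : I, ∑ c : J,
      (Matrix.single a c (1 : F)) ⊗ₖ
        (Matrix.of fun u v => M (a, u) (c, v)) := by
  ext ⟨p, u⟩ ⟨r, v⟩
  simp [Matrix.sum_apply, Matrix.kroneckerMap_apply, Matrix.single, ite_and,
    Finset.sum_ite_eq, eq_comm]
end helpers

theorem uniform_kronecker_quotient_basis_expansion_iff
    {F : Type*} [Field F]
    (q : ∀ (m n s t : ℕ), Matrix (Fin m) (Fin n) F →
      Matrix (Fin m × Fin s) (Fin n × Fin t) F → Matrix (Fin s) (Fin t) F)
    (Q : ∀ (m n : ℕ), Matrix (Fin m) (Fin n) F → Matrix (Fin m) (Fin n) F)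
    (hquot : ∀ (m n s t : ℕ) (A : Matrix (Fin m) (Fin n) F), A ≠ 0 →
      ∀ B : Matrix (Fin s) (Fin t) F, q m n s t A (A ⊗ₖ B) = B)
    (hQnz : ∀ (m n : ℕ) (A : Matrix (Fin m) (Fin n) F), A ≠ 0 → Q m n A ≠ 0)
    (hQone : ∀ (m n : ℕ) (A : Matrix (Fin m) (Fin n) F), A ≠ 0 →
      pfrobS (Q m n A) A = 1)
    (hunif : ∀ (m n s t : ℕ) (A : Matrix (Fin m) (Fin n) F), A ≠ 0 →
      ∀ M : Matrix (Fin m × Fin s) (Fin n × Fin t) F,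
        q m n s t A M = pfrob (Q m n A) M)
    (m n : ℕ) (b : Module.Basis (Fin (m * n)) F (Matrix (Fin m) (Fin n) F)) :
    (∀ (s t : ℕ) (M : Matrix (Fin m × Fin s) (Fin n × Fin t) F),
      M = ∑ j : Fin (m * n), (b j) ⊗ₖ (q m n s t (b j) M)) ↔
    (∀ j k : Fin (m * n),
      pfrobS (Q m n (b j)) (b k) = if j = k then (1 : F) else 0) := by
  have hbnz : ∀ j, b j ≠ 0 := fun j => b.ne_zero j
  constructor
  · intro h j k
    have h1 := h 1 1 ((b k) ⊗ₖ (1 : Matrix (Fin 1) (Fin 1) F))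
    rw [Finset.sum_congr rfl (fun j' _ => by
      rw [hunif _ _ _ _ _ (hbnz j'), pfrob_kron])] at h1
    have hb : b k = ∑ j', pfrobS (Q m n (b j')) (b k) • b j' := by
      ext p r
      have h2 := congrFun (congrFun h1 (p, 0)) (r, 0)
      simpa [Matrix.sum_apply, Matrix.kroneckerMap_apply, Matrix.one_apply,
        mul_comm] using h2
    have h3 := congrArg (fun X => b.repr X j) hb
    simp only [map_sum, _root_.map_smul, Module.Basis.repr_self, Finsupp.coe_finset_sum,
      Finset.sum_apply, Finsupp.smul_apply, Finsupp.single_apply, smul_eq_mul,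
      mul_ite, mul_one, mul_zero] at h3
    rw [Finset.sum_ite_eq' Finset.univ j (fun x => pfrobS (Q m n (b x)) (b k)),
      if_pos (Finset.mem_univ j)] at h3
    rw [← h3]
    simp [eq_comm]
  · intro horth s t M
    have key : ∀ (A : Matrix (Fin m) (Fin n) F) (B : Matrix (Fin s) (Fin t) F),
        ∑ j, (b j) ⊗ₖ pfrob (Q m n (b j)) (A ⊗ₖ B) = A ⊗ₖ B := by
      intro A B
      have hc : ∀ j, pfrobS (Q m n (b j)) A = b.repr A j := by
        intro j
        conv_lhs => rw [← b.sum_repr A]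
        rw [show pfrobS (Q m n (b j)) (∑ i, b.repr A i • b i)
            = ∑ i, b.repr A i • pfrobS (Q m n (b j)) (b i) by
          simp only [← pfrobSL_apply, map_sum, _root_.map_smul]]
        simp only [horth, smul_eq_mul, mul_ite, mul_one, mul_zero]
        rw [Finset.sum_ite_eq, if_pos (Finset.mem_univ j)]
      calc ∑ j, (b j) ⊗ₖ pfrob (Q m n (b j)) (A ⊗ₖ B)
          = ∑ j, ((b.repr A j • b j) ⊗ₖ B) := by
            refine Finset.sum_congr rfl fun j _ => ?_
            rw [pfrob_kron, hc j, ← kronR_apply, _root_.map_smul,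
              kronR_apply, Matrix.smul_kronecker]
        _ = (∑ j, b.repr A j • b j) ⊗ₖ B := by
            rw [← kronL_apply, map_sum]
            simp only [kronL_apply]
        _ = A ⊗ₖ B := by rw [b.sum_repr A]
    have hM := decomp M
    rw [Finset.sum_congr rfl (fun j _ => by rw [hunif _ _ _ _ _ (hbnz j)])]
    calc M = ∑ a : Fin m, ∑ c : Fin n,
          (Matrix.single a c (1 : F)) ⊗ₖ
            (Matrix.of fun u v => M (a, u) (c, v)) := hM
      _ = ∑ a : Fin m, ∑ c : Fin n, ∑ j : Fin (m * n),
          (b j) ⊗ₖ pfrob (Q m n (b j))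
            ((Matrix.single a c (1 : F)) ⊗ₖ
              (Matrix.of fun u v => M (a, u) (c, v))) := by
          exact Finset.sum_congr rfl fun a _ =>
            Finset.sum_congr rfl fun c _ => (key _ _).symm
      _ = ∑ j : Fin (m * n), ∑ a : Fin m, ∑ c : Fin n,
          (b j) ⊗ₖ pfrob (Q m n (b j))
            ((Matrix.single a c (1 : F)) ⊗ₖ
              (Matrix.of fun u v => M (a, u) (c, v))) := by
          rw [Finset.sum_congr rfl fun a (_ : a ∈ Finset.univ) => Finset.sum_comm,
            Finset.sum_comm]
      _ = ∑ j : Fin (m * n), (b j) ⊗ₖ pfrob (Q m n (b j)) M := by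
          refine Finset.sum_congr rfl fun j _ => ?_
          rw [show pfrob (Q m n (b j)) M = ∑ a : Fin m, ∑ c : Fin n,
              pfrob (Q m n (b j))
                ((Matrix.single a c (1 : F)) ⊗ₖ
                  (Matrix.of fun u v => M (a, u) (c, v))) from by
            conv_lhs => rw [hM]
            rw [pfrob_sum]
            exact Finset.sum_congr rfl fun a _ => pfrob_sum _ _ _,
            kron_sum]
          exact Finset.sum_congr rfl fun a _ => (kron_sum _ _ _).symm
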